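/- For every twice continuously differentiable matrix field S : ℝ³ → Sym(3) taking values in the symmetric 3×3 matrices, the matrix Curl((Curl S)ᵀ) is symmetric at every point of ℝ³. -/

import Mathlib

open Matrix

/-- Partial derivative in direction `j` of a scalar field on `ℝ³`. -/
noncomputable def pd (j : Fin 3) (f : (Fin 3 → ℝ) → ℝ) (x : Fin 3 → ℝ) : ℝ :=
  fderiv ℝ f x (Pi.single j 1)

/-- Gradient of a scalar field on `ℝ³`. -/
noncomputable def grad3 (f : (Fin 3 → ℝ) → ℝ) (x : Fin 3 → ℝ) : Fin 3 → ℝ :=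
  fun i => pd i f x

/-- Classical curl of a vector field on `ℝ³`. -/
noncomputable def vcurl (v : (Fin 3 → ℝ) → Fin 3 → ℝ) (x : Fin 3 → ℝ) : Fin 3 → ℝ :=
  ![pd 1 (fun y => v y 2) x - pd 2 (fun y => v y 1) x,
    pd 2 (fun y => v y 0) x - pd 0 (fun y => v y 2) x,
    pd 0 (fun y => v y 1) x - pd 1 (fun y => v y 0) x]

/-- Divergence of a vector field on `ℝ³`. -/
noncomputable def vdiv (v : (Fin 3 → ℝ) → Fin 3 → ℝ) (x : Fin 3 → ℝ) : ℝ :=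
  ∑ i, pd i (fun y => v y i) x

/-- Row-wise Curl of a matrix field on `ℝ³`: the `i`-th row of `mCurl P`
is the curl of the `i`-th row of `P`. -/
noncomputable def mCurl (P : (Fin 3 → ℝ) → Matrix (Fin 3) (Fin 3) ℝ) (x : Fin 3 → ℝ) :
    Matrix (Fin 3) (Fin 3) ℝ :=
  Matrix.of fun i j => vcurl (fun y => P y i) x j

/-- Jacobian matrix of a vector field on `ℝ³`. -/
noncomputable def jac (v : (Fin 3 → ℝ) → Fin 3 → ℝ) (x : Fin 3 → ℝ) :
    Matrix (Fin 3) (Fin 3) ℝ :=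
  Matrix.of fun i j => pd j (fun y => v y i) x

/-- Axial vector of a (skew-symmetric) `3 × 3` matrix: with `A 1 2 = -a₁`,
`A 2 0 = -a₂`, `A 0 1 = -a₃` (so `A 2 1 = a₁`, `A 0 2 = a₂`, `A 1 0 = a₃`). -/
def axl (A : Matrix (Fin 3) (Fin 3) ℝ) : Fin 3 → ℝ :=
  ![A 2 1, A 0 2, A 1 0]

/-- The skew-symmetric matrix `anti a` characterized by `(anti a) ⬝ v = a × v`. -/
def antiM (a : Fin 3 → ℝ) : Matrix (Fin 3) (Fin 3) ℝ :=
  !![0, -a 2, a 1; a 2, 0, -a 0; -a 1, a 0, 0]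

/-- Symmetric part of a matrix. -/
noncomputable def symM (X : Matrix (Fin 3) (Fin 3) ℝ) : Matrix (Fin 3) (Fin 3) ℝ :=
  (1 / 2 : ℝ) • (X + Xᵀ)

/-- Skew-symmetric part of a matrix. -/
noncomputable def skewM (X : Matrix (Fin 3) (Fin 3) ℝ) : Matrix (Fin 3) (Fin 3) ℝ :=
  (1 / 2 : ℝ) • (X - Xᵀ)

/-- Deviatoric (trace-free) part of a matrix. -/
noncomputable def devM (X : Matrix (Fin 3) (Fin 3) ℝ) : Matrix (Fin 3) (Fin 3) ℝ :=
  X - (Matrix.trace X / 3) • (1 : Matrix (Fin 3) (Fin 3) ℝ)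

/-- Frobenius inner product `⟨X, Y⟩ = tr (X Yᵀ)`. -/
noncomputable def minner (X Y : Matrix (Fin 3) (Fin 3) ℝ) : ℝ :=
  Matrix.trace (X * Yᵀ)

/-- Squared Frobenius norm. -/
noncomputable def mnormSq (X : Matrix (Fin 3) (Fin 3) ℝ) : ℝ :=
  minner X X

/-- Squared Euclidean norm of a vector in `ℝ³`. -/
def vnormSq (v : Fin 3 → ℝ) : ℝ :=
  ∑ i, (v i) ^ 2


lemma pd_eq' (j f) : pd j f = fun x => (ContinuousLinearMap.apply ℝ ℝ (Pi.single j 1 : Fin 3 → ℝ)) (fderiv ℝ f x) := rfl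

lemma pd_contDiff (f : (Fin 3 → ℝ) → ℝ) (hf : ContDiff ℝ 2 f) (j : Fin 3) :
    ContDiff ℝ 1 (pd j f) := by
  rw [pd_eq']
  exact (ContinuousLinearMap.apply ℝ ℝ (Pi.single j 1 : Fin 3 → ℝ)).contDiff.comp
    (hf.fderiv_right (m := 1) (by norm_num))

lemma pd_diffAt (f : (Fin 3 → ℝ) → ℝ) (hf : ContDiff ℝ 2 f) (j : Fin 3) (x : Fin 3 → ℝ) :
    DifferentiableAt ℝ (pd j f) x :=
  ((pd_contDiff f hf j).differentiable one_ne_zero) x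

lemma pd_sub (f g : (Fin 3 → ℝ) → ℝ) (j : Fin 3) (x : Fin 3 → ℝ)
    (hf : DifferentiableAt ℝ f x) (hg : DifferentiableAt ℝ g x) :
    pd j (fun y => f y - g y) x = pd j f x - pd j g x := by
  simp [pd, fderiv_fun_sub hf hg]

lemma pd_comm (f : (Fin 3 → ℝ) → ℝ) (hf : ContDiff ℝ 2 f) (i j : Fin 3) (x : Fin 3 → ℝ) :
    pd i (pd j f) x = pd j (pd i f) x := by
  have hsymm : IsSymmSndFDerivAt ℝ f x := hf.contDiffAt.isSymmSndFDerivAt (by norm_num)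
  have h : ∀ a b : Fin 3, pd a (pd b f) x
      = fderiv ℝ (fderiv ℝ f) x (Pi.single a 1) (Pi.single b 1) := by
    intro a b
    have hd : DifferentiableAt ℝ (fderiv ℝ f) x :=
      ((hf.fderiv_right (m := 1) (by norm_num)).differentiable one_ne_zero) x
    have he : pd b f = fun y => (fderiv ℝ f y) ((fun _ : Fin 3 → ℝ => (Pi.single b 1 : Fin 3 → ℝ)) y) := rfl
    rw [pd, he, fderiv_clm_apply hd (differentiableAt_const _)]
    simp
  rw [h, h, hsymm.eq]

/-- For a symmetric matrix field S, the matrix Curl((Curl S)ᵀ) is symmetric. -/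
theorem curl_curl_transpose_sym
    (S : (Fin 3 → ℝ) → Matrix (Fin 3) (Fin 3) ℝ)
    (hS_sym : ∀ x, (S x)ᵀ = S x)
    (hS_diff : ∀ i j, ContDiff ℝ 2 (fun y => S y i j)) :
    ∀ x : Fin 3 → ℝ,
      (mCurl (fun y => (mCurl S y)ᵀ) x)ᵀ = mCurl (fun y => (mCurl S y)ᵀ) x := by
  intro x
  have hs : ∀ a b : Fin 3, (fun y => S y a b) = (fun y => S y b a) := by
    intro a b; funext y
    simpa using congrFun (congrFun (hS_sym y) b) a
  have hsplit : ∀ (a b c i j k l : Fin 3) (x : Fin 3 → ℝ),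
      pd a (fun y => pd b (fun w => S w i j) y - pd c (fun w => S w k l) y) x
        = pd a (pd b fun w => S w i j) x - pd a (pd c fun w => S w k l) x :=
    fun a b c i j k l x =>
      pd_sub _ _ a x (pd_diffAt _ (hS_diff i j) b x) (pd_diffAt _ (hS_diff k l) c x)
  have hc10 : ∀ (i j : Fin 3) (x : Fin 3 → ℝ),
      pd 1 (pd 0 (fun w => S w i j)) x = pd 0 (pd 1 (fun w => S w i j)) x :=
    fun i j x => pd_comm _ (hS_diff i j) 1 0 x
  have hc20 : ∀ (i j : Fin 3) (x : Fin 3 → ℝ),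
      pd 2 (pd 0 (fun w => S w i j)) x = pd 0 (pd 2 (fun w => S w i j)) x :=
    fun i j x => pd_comm _ (hS_diff i j) 2 0 x
  have hc21 : ∀ (i j : Fin 3) (x : Fin 3 → ℝ),
      pd 2 (pd 1 (fun w => S w i j)) x = pd 1 (pd 2 (fun w => S w i j)) x :=
    fun i j x => pd_comm _ (hS_diff i j) 2 1 x
  ext i j
  fin_cases i <;> fin_cases j <;>
    simp only [mCurl, vcurl, Matrix.transpose_apply, Matrix.of_apply, Fin.zero_eta, Fin.mk_one,
      Matrix.cons_val_zero, Matrix.cons_val_one, Matrix.head_cons, Fin.reduceFinMk,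
      Matrix.cons_val_two, Matrix.tail_cons, Fin.isValue]
  all_goals first
    | rfl
    | (simp only [hs 1 0, hs 2 0, hs 2 1, hsplit, hc10, hc20, hc21]; ring)
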